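/- Let (X, μ) be a measure space with μ a nonnegative measure, let 1 < p < ∞ and let p' be the conjugate exponent of p. If f ∈ L^p(X, μ) and g ∈ L^{p'}(X, μ) are complex-valued functions such that ∫_X f·g dμ = ‖f‖_p · ‖g‖_{p'} ≠ 0, then for μ-almost every x ∈ X one has g(x) = ‖g‖_{p'} · ‖f‖_p^{1−p} · |f(x)|^{p−1} · sgn(conj(f(x))). -/

import Mathlib

open MeasureTheory Complex

/-- The signum function `sgn : ℂ → ℂ`, with `sgn 0 = 0`. -/
noncomputable def csgn (z : ℂ) : ℂ := if z = 0 then 0 else z / ‖z‖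

lemma re_eq_abs_imp {z : ℂ} (h : z.re = ‖z‖) : z = (‖z‖ : ℝ) := by
  have h1 : z.re * z.re + z.im * z.im = z.re * z.re := by
    rw [← Complex.normSq_apply, ← Complex.sq_norm, ← h]; ring
  have him : z.im = 0 := by nlinarith [h1]
  apply Complex.ext <;> simp [← h, him]

lemma young_eq {a b p q : ℝ} (hpq : p.HolderConjugate q) (ha : 0 ≤ a) (hb : 0 ≤ b)
    (h : a * b = a ^ p / p + b ^ q / q) : a ^ p = b ^ q := by
  have hp := hpq.pos
  have hq := hpq.symm.pos
  rcases ha.eq_or_lt with rfl | ha'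
  · rw [Real.zero_rpow hpq.ne_zero] at h ⊢
    rw [zero_mul, zero_div, zero_add] at h
    field_simp at h
    simpa using h
  rcases hb.eq_or_lt with rfl | hb'
  · rw [Real.zero_rpow hpq.symm.ne_zero] at h ⊢
    rw [mul_zero, zero_div, add_zero] at h
    field_simp at h
    simpa using h.symm
  by_contra hne
  have hx : a ^ p = Real.exp (Real.log a * p) := by
    rw [Real.rpow_def_of_pos ha']
  have hy : b ^ q = Real.exp (Real.log b * q) := by
    rw [Real.rpow_def_of_pos hb']
  have hxy : Real.log a * p ≠ Real.log b * q := fun hc => hne (by rw [hx, hy, hc])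
  have key := strictConvexOn_exp.2 (Set.mem_univ (Real.log a * p)) (Set.mem_univ (Real.log b * q))
    hxy (by positivity : (0:ℝ) < 1/p) (by positivity : (0:ℝ) < 1/q)
    (by simpa [one_div] using hpq.inv_add_inv_eq_one)
  have hab : (1/p) • (Real.log a * p) + (1/q) • (Real.log b * q)
      = Real.log a + Real.log b := by
    rw [smul_eq_mul, smul_eq_mul]; field_simp
  rw [hab, Real.exp_add, Real.exp_log ha', Real.exp_log hb', smul_eq_mul, smul_eq_mul,
    ← hx, ← hy, h] at key
  have e1 : a ^ p / p = 1/p * a ^ p := by ring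
  have e2 : b ^ q / q = 1/q * b ^ q := by ring
  linarith [key]

/-- Equality case in the generalized Hölder inequality, `1 < p < ∞`. -/
theorem equality_in_holder {X : Type*} [MeasurableSpace X] (μ : Measure X)
    (p q : ℝ) (hpq : p.HolderConjugate q)
    (f g : X → ℂ)
    (hf : MemLp f (ENNReal.ofReal p) μ)
    (hg : MemLp g (ENNReal.ofReal q) μ)
    (heq : ∫ x, f x * g x ∂μ =
      (((eLpNorm f (ENNReal.ofReal p) μ).toReal *
        (eLpNorm g (ENNReal.ofReal q) μ).toReal : ℝ) : ℂ))
    (hne : (eLpNorm f (ENNReal.ofReal p) μ).toReal *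
      (eLpNorm g (ENNReal.ofReal q) μ).toReal ≠ 0) :
    ∀ᵐ x ∂μ, g x =
      (((eLpNorm g (ENNReal.ofReal q) μ).toReal : ℝ) : ℂ) *
      ((((eLpNorm f (ENNReal.ofReal p) μ).toReal ^ (1 - p) : ℝ)) : ℂ) *
      (((‖f x‖ ^ (p - 1) : ℝ)) : ℂ) *
      csgn (starRingEnd ℂ (f x)) := by
  have hp := hpq.pos
  have hq := hpq.symm.pos
  set A := (eLpNorm f (ENNReal.ofReal p) μ).toReal with hAdef
  set B := (eLpNorm g (ENNReal.ofReal q) μ).toReal with hBdef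
  have hA0 : 0 < A := lt_of_le_of_ne ENNReal.toReal_nonneg
    (fun h => hne (by rw [← h, zero_mul]))
  have hB0 : 0 < B := lt_of_le_of_ne ENNReal.toReal_nonneg
    (fun h => hne (by rw [← h, mul_zero]))
  have hP0 : (ENNReal.ofReal p) ≠ 0 := by simp [ENNReal.ofReal_eq_zero, not_le, hp]
  have hQ0 : (ENNReal.ofReal q) ≠ 0 := by simp [ENNReal.ofReal_eq_zero, not_le, hq]
  have hPt : (ENNReal.ofReal p) ≠ ⊤ := ENNReal.ofReal_ne_top
  have hQt : (ENNReal.ofReal q) ≠ ⊤ := ENNReal.ofReal_ne_top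
  have hPr : (ENNReal.ofReal p).toReal = p := ENNReal.toReal_ofReal hp.le
  have hQr : (ENNReal.ofReal q).toReal = q := ENNReal.toReal_ofReal hq.le
  -- integrability of |f|^p, |g|^q
  have intFp : Integrable (fun x => ‖f x‖ ^ p) μ := by
    simpa [hPr] using hf.integrable_norm_rpow hP0 hPt
  have intGq : Integrable (fun x => ‖g x‖ ^ q) μ := by
    simpa [hQr] using hg.integrable_norm_rpow hQ0 hQt
  -- the L^p norms as integrals
  have hAint : ∫ x, ‖f x‖ ^ p ∂μ = A ^ p := by
    have h := hf.eLpNorm_eq_integral_rpow_norm hP0 hPt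
    rw [hPr] at h
    have hInt : 0 ≤ ∫ x, ‖f x‖ ^ p ∂μ :=
      integral_nonneg fun x => Real.rpow_nonneg (norm_nonneg _) _
    rw [hAdef, h, ENNReal.toReal_ofReal (Real.rpow_nonneg hInt _),
      Real.rpow_inv_rpow hInt hpq.ne_zero]
  have hBint : ∫ x, ‖g x‖ ^ q ∂μ = B ^ q := by
    have h := hg.eLpNorm_eq_integral_rpow_norm hQ0 hQt
    rw [hQr] at h
    have hInt : 0 ≤ ∫ x, ‖g x‖ ^ q ∂μ :=
      integral_nonneg fun x => Real.rpow_nonneg (norm_nonneg _) _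
    rw [hBdef, h, ENNReal.toReal_ofReal (Real.rpow_nonneg hInt _),
      Real.rpow_inv_rpow hInt hpq.symm.ne_zero]
  -- Hölder inequality
  have Hle : ∫ x, ‖f x‖ * ‖g x‖ ∂μ ≤ A * B := by
    have h := integral_mul_norm_le_Lp_mul_Lq hpq hf hg
    rwa [hAint, hBint, one_div, one_div, Real.rpow_rpow_inv hA0.le hpq.ne_zero,
      Real.rpow_rpow_inv hB0.le hpq.symm.ne_zero] at h
  -- integrability of f * g
  have hm1 : MemLp (fun x => f x * g x) 1 μ := by
    have h : (1 : ENNReal) / 1 = 1 / (ENNReal.ofReal p) + 1 / (ENNReal.ofReal q) := by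
      simp only [one_div]
      rw [hpq.inv_add_inv_ennreal, inv_one]
    have hs := MemLp.smul (E := ℂ) (𝕜 := ℂ) (r := 1) hg hf (hpqr := ⟨by simpa [one_div] using h.symm⟩)
    exact hs
  have FGint : Integrable (fun x => f x * g x) μ := memLp_one_iff_integrable.mp hm1
  have prodNormInt : Integrable (fun x => ‖f x‖ * ‖g x‖) μ := by
    simpa [norm_mul] using FGint.norm
  -- equality in Hölder
  have Habs : A * B ≤ ∫ x, ‖f x‖ * ‖g x‖ ∂μ := by
    have h1 : ‖∫ x, f x * g x ∂μ‖ ≤ ∫ x, ‖f x * g x‖ ∂μ := norm_integral_le_integral_norm _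
    rw [heq] at h1
    have h2 : ‖((A * B : ℝ) : ℂ)‖ = A * B := by
      rw [Complex.norm_real, Real.norm_of_nonneg (by positivity)]
    rw [h2] at h1
    simpa [norm_mul] using h1
  have Hprod : ∫ x, ‖f x‖ * ‖g x‖ ∂μ = A * B := le_antisymm Hle Habs
  -- Step 1: f x * g x is a.e. equal to its absolute value
  have step1 : ∀ᵐ x ∂μ, f x * g x = ((‖f x * g x‖ : ℝ) : ℂ) := by
    have hnonneg : 0 ≤ᵐ[μ] fun x => ‖f x * g x‖ - (f x * g x).re :=
      Filter.Eventually.of_forall fun x => by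
        show (0:ℝ) ≤ ‖f x * g x‖ - (f x * g x).re
        have := Complex.re_le_norm (f x * g x)
        linarith
    have hre : Integrable (fun x => (f x * g x).re) μ := by
      simpa using FGint.re
    have hint : Integrable (fun x => ‖f x * g x‖ - (f x * g x).re) μ :=
      FGint.norm.sub hre
    have hzero : ∫ x, (‖f x * g x‖ - (f x * g x).re) ∂μ = 0 := by
      rw [integral_sub FGint.norm hre]
      have hir : ∫ x, (f x * g x).re ∂μ = (∫ x, f x * g x ∂μ).re := by
        simpa using integral_re FGint
      rw [hir, heq]
      have : ∫ x, ‖f x * g x‖ ∂μ = A * B := by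
        rw [← Hprod]; exact integral_congr_ae (Filter.Eventually.of_forall fun x => norm_mul _ _)
      rw [this]
      simp
    have := (integral_eq_zero_iff_of_nonneg_ae hnonneg hint).mp hzero
    filter_upwards [this] with x hx
    have hre : (f x * g x).re = ‖f x * g x‖ := by
      have : ‖f x * g x‖ - (f x * g x).re = 0 := hx
      linarith
    exact re_eq_abs_imp hre
  -- Step 2: equality in Young's inequality a.e.
  have step2 : ∀ᵐ x ∂μ, (‖f x‖ / A) ^ p = (‖g x‖ / B) ^ q := by
    set w : X → ℝ := fun x =>
      (‖f x‖ / A) ^ p / p + (‖g x‖ / B) ^ q / q - (‖f x‖ / A) * (‖g x‖ / B) with hw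
    have hwnonneg : 0 ≤ᵐ[μ] w := Filter.Eventually.of_forall fun x => by
      have hy := Real.young_inequality (‖f x‖ / A) (‖g x‖ / B) hpq
      rw [_root_.abs_of_nonneg (by positivity), _root_.abs_of_nonneg (by positivity)] at hy
      simp only [hw, Pi.zero_apply]; linarith
    have e1 : ∀ x : X, (‖f x‖ / A) ^ p = ‖f x‖ ^ p / A ^ p := fun x =>
      Real.div_rpow (norm_nonneg _) hA0.le p
    have e2 : ∀ x : X, (‖g x‖ / B) ^ q = ‖g x‖ ^ q / B ^ q := fun x =>
      Real.div_rpow (norm_nonneg _) hB0.le q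
    have int1 : Integrable (fun x => (‖f x‖ / A) ^ p / p) μ := by
      simp only [e1]; exact (intFp.div_const _).div_const _
    have int2 : Integrable (fun x => (‖g x‖ / B) ^ q / q) μ := by
      simp only [e2]; exact (intGq.div_const _).div_const _
    have int3 : Integrable (fun x => (‖f x‖ / A) * (‖g x‖ / B)) μ := by
      have : (fun x => (‖f x‖ / A) * (‖g x‖ / B)) = fun x => ‖f x‖ * ‖g x‖ / (A * B) := by
        funext x; field_simp <;> ring
      rw [this]; exact prodNormInt.div_const _
    have hwint : Integrable w μ := (int1.add int2).sub int3
    have hwzero : ∫ x, w x ∂μ = 0 := by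
      have esub : ∫ x, ((‖f x‖ / A) ^ p / p + (‖g x‖ / B) ^ q / q)
            - (‖f x‖ / A) * (‖g x‖ / B) ∂μ
          = (∫ x, ((‖f x‖ / A) ^ p / p + (‖g x‖ / B) ^ q / q) ∂μ)
            - ∫ x, (‖f x‖ / A) * (‖g x‖ / B) ∂μ := integral_sub (int1.add int2) int3
      have eadd : ∫ x, ((‖f x‖ / A) ^ p / p + (‖g x‖ / B) ^ q / q) ∂μ
          = (∫ x, (‖f x‖ / A) ^ p / p ∂μ) + ∫ x, (‖g x‖ / B) ^ q / q ∂μ :=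
        integral_add int1 int2
      have i1 : ∫ x, (‖f x‖ / A) ^ p / p ∂μ = 1 / p := by
        simp only [e1]
        rw [integral_div, integral_div, hAint]
        field_simp
      have i2 : ∫ x, (‖g x‖ / B) ^ q / q ∂μ = 1 / q := by
        simp only [e2]
        rw [integral_div, integral_div, hBint]
        field_simp
      have i3 : ∫ x, (‖f x‖ / A) * (‖g x‖ / B) ∂μ = 1 := by
        have hrw : (fun x => (‖f x‖ / A) * (‖g x‖ / B)) = fun x => ‖f x‖ * ‖g x‖ / (A * B) := by
          funext x; field_simp <;> ring
        rw [hrw, integral_div, Hprod]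
        field_simp
      simp only [hw]
      rw [esub, eadd, i1, i2, i3]
      have := hpq.inv_add_inv_eq_one
      simp only [one_div]
      linarith
    have := (integral_eq_zero_iff_of_nonneg_ae hwnonneg hwint).mp hwzero
    filter_upwards [this] with x hx
    apply young_eq hpq (by positivity) (by positivity)
    have : w x = 0 := hx
    simp only [hw] at this
    linarith
  -- Combine
  filter_upwards [step1, step2] with x h1 h2
  by_cases hf0 : f x = 0
  · -- then g x = 0 and the RHS is 0
    have hgx : g x = 0 := by
      rw [hf0] at h2
      simp only [norm_zero, zero_div, Real.zero_rpow hpq.ne_zero] at h2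
      by_contra hg0
      have hgn : 0 < ‖g x‖ := norm_pos_iff.mpr hg0
      have : 0 < ‖g x‖ / B := by positivity
      exact absurd h2.symm (ne_of_gt (Real.rpow_pos_of_pos this q))
    rw [hgx, hf0]
    simp [csgn, Real.zero_rpow hpq.sub_one_ne_zero]
  · -- f x ≠ 0
    have hF0 : 0 < ‖f x‖ := norm_pos_iff.mpr hf0
    have hnormf : ‖f x‖ = ‖f x‖ := rfl
    have hpdivq : p * q⁻¹ = p - 1 := by
      have h := hpq.div_conj_eq_sub_one
      rwa [div_eq_mul_inv] at h
    have hgB : ‖g x‖ / B = (‖f x‖ / A) ^ (p - 1) := by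
      have h4 := congrArg (fun t : ℝ => t ^ q⁻¹) h2
      rw [← Real.rpow_mul (by positivity), hpdivq,
        Real.rpow_rpow_inv (by positivity) hpq.symm.ne_zero] at h4
      exact h4.symm
    have hG : ‖g x‖ = B * (‖f x‖ ^ (p - 1) * A ^ (1 - p)) := by
      have e : (‖f x‖ / A) ^ (p - 1) = ‖f x‖ ^ (p - 1) / A ^ (p - 1) :=
        Real.div_rpow (norm_nonneg _) hA0.le _
      have e2 : A ^ (1 - p) = (A ^ (p - 1))⁻¹ := by
        rw [show (1 - p) = -(p - 1) by ring, Real.rpow_neg hA0.le]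
      have hApow : 0 < A ^ (p - 1) := Real.rpow_pos_of_pos hA0 _
      rw [e] at hgB
      rw [e2]
      field_simp at hgB ⊢
      linarith [hgB]
    have hcsgn : csgn (starRingEnd ℂ (f x)) = starRingEnd ℂ (f x) / (‖f x‖ : ℂ) := by
      rw [csgn, if_neg (by simpa using hf0), Complex.norm_conj]
    have habs2 : f x * starRingEnd ℂ (f x) = ((‖f x‖ ^ 2 : ℝ) : ℂ) := by
      rw [Complex.mul_conj, Complex.normSq_eq_norm_sq]
    have hfg : f x * g x = ((‖f x‖ * ‖g x‖ : ℝ) : ℂ) := by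
      rw [h1, norm_mul]
    have hFC : (‖f x‖ : ℂ) ≠ 0 := by exact_mod_cast hF0.ne'
    apply mul_left_cancel₀ hf0
    rw [hfg, hG, hcsgn]
    push_cast
    field_simp
    push_cast at habs2
    linear_combination -((B : ℝ) : ℂ) * ((‖f x‖ ^ (p - 1) : ℝ) : ℂ) *
      ((A ^ (1 - p) : ℝ) : ℂ) * habs2
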